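/- arXiv:2203.13603 — 2 statements merged into one kernel-verified Lean document; each statement's English description precedes it below -/
import Mathlib

section
/- Suppose z : [t₀,∞) → ℝⁿ and ξ : [t₀,∞) → ℝᵐ satisfy the ISS estimate ‖z(t)‖ ≤ β(‖z(t₁)‖, t − t₁) + γ(sup_{t₁ ≤ τ ≤ t} ‖ξ(τ)‖) for all t ≥ t₁ ≥ t₀, where β is class KL and γ is class K. If ξ(t) → 0 as t → ∞ and ξ is bounded, then z(t) → 0 as t → ∞. -/
open Filter Topology

/-- If z satisfies the ISS estimate
‖z(t)‖ ≤ β(‖z(t₁)‖, t − t₁) + γ(sup_{t₁ ≤ τ ≤ t} ‖ξ(τ)‖) for all t ≥ t₁ ≥ t₀,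
with β class KL and γ class K, and ξ is bounded with ξ(t) → 0, then z(t) → 0. -/
theorem iss_state_convergence
    {n m : ℕ}
    (β : ℝ → ℝ → ℝ) (γ : ℝ → ℝ)
    -- γ is of class K
    (hγ_cont : ContinuousOn γ (Set.Ici 0))
    (hγ_mono : StrictMonoOn γ (Set.Ici 0))
    (hγ_zero : γ 0 = 0)
    -- β is of class KL
    (hβ_contr : ∀ s ≥ (0:ℝ), ContinuousOn (fun r => β r s) (Set.Ici 0))
    (hβ_monor : ∀ s ≥ (0:ℝ), StrictMonoOn (fun r => β r s) (Set.Ici 0))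
    (hβ_zeror : ∀ s ≥ (0:ℝ), β 0 s = 0)
    (hβ_antis : ∀ r ≥ (0:ℝ), AntitoneOn (fun s => β r s) (Set.Ici 0))
    (hβ_lim : ∀ r ≥ (0:ℝ), Tendsto (fun s => β r s) atTop (𝓝 0))
    (t₀ : ℝ)
    (z : ℝ → EuclideanSpace ℝ (Fin n)) (ξ : ℝ → EuclideanSpace ℝ (Fin m))
    -- the ISS estimate, valid for every restart time t₁ ≥ t₀
    (hISS : ∀ t₁ t : ℝ, t₀ ≤ t₁ → t₁ ≤ t →
      ‖z t‖ ≤ β ‖z t₁‖ (t - t₁) + γ (⨆ τ : Set.Icc t₁ t, ‖ξ (τ : ℝ)‖))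
    -- ξ is bounded and converges to 0
    (hξ_bdd : ∃ M : ℝ, ∀ t : ℝ, t₀ ≤ t → ‖ξ t‖ ≤ M)
    (hξ_lim : Tendsto ξ atTop (𝓝 0)) :
    Tendsto z atTop (𝓝 0) := by

  rw [NormedAddCommGroup.tendsto_nhds_zero]
  intro ε hε
  -- continuity of γ at 0 within Ici 0
  have hγ0 : Tendsto γ (𝓝[Set.Ici (0:ℝ)] 0) (𝓝 0) := by
    have h := hγ_cont 0 (le_refl (0:ℝ))
    simpa [ContinuousWithinAt, hγ_zero] using h
  obtain ⟨δ, hδpos, hδ⟩ := Metric.tendsto_nhdsWithin_nhds.mp hγ0 (ε/2) (by linarith)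
  -- choose T₁ such that ‖ξ t‖ < δ/2 for t ≥ T₁
  have hξsmall : ∀ᶠ t in atTop, ‖ξ t‖ < δ/2 :=
    (NormedAddCommGroup.tendsto_nhds_zero.mp hξ_lim) (δ/2) (by linarith)
  obtain ⟨T₁, hT₁⟩ := Filter.eventually_atTop.mp hξsmall
  set T := max T₁ t₀ with hT
  have hTt₀ : t₀ ≤ T := le_max_right _ _
  have hTT₁ : T₁ ≤ T := le_max_left _ _
  -- choose S such that β ‖z T‖ s is small for s ≥ S
  have hβT := hβ_lim ‖z T‖ (norm_nonneg _)
  have hβsmall : ∀ᶠ s in atTop, |β ‖z T‖ s| < ε/2 := by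
    have := hβT.eventually (eventually_abs_sub_lt 0 (show (0:ℝ) < ε/2 by linarith))
    simpa using this
  obtain ⟨S, hS⟩ := Filter.eventually_atTop.mp hβsmall
  filter_upwards [Filter.eventually_ge_atTop T, Filter.eventually_ge_atTop (T + S)]
    with t ht htS
  have hISSt := hISS T t hTt₀ ht
  -- bound the sup term
  haveI : Nonempty (Set.Icc T t) := (Set.nonempty_Icc.mpr ht).to_subtype
  have hbd : ∀ τ : Set.Icc T t, ‖ξ (τ : ℝ)‖ ≤ δ/2 := by
    rintro ⟨τ, hτ1, hτ2⟩
    exact le_of_lt (hT₁ τ (le_trans hTT₁ hτ1))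
  have hsup_le : (⨆ τ : Set.Icc T t, ‖ξ (τ : ℝ)‖) ≤ δ/2 := ciSup_le hbd
  have hbdd : BddAbove (Set.range fun τ : Set.Icc T t => ‖ξ (τ : ℝ)‖) :=
    ⟨δ/2, by rintro x ⟨τ, rfl⟩; exact hbd τ⟩
  have hsup_nonneg : (0:ℝ) ≤ ⨆ τ : Set.Icc T t, ‖ξ (τ : ℝ)‖ :=
    le_trans (norm_nonneg (ξ T)) (le_ciSup hbdd ⟨T, le_refl _, ht⟩)
  -- γ term small
  have hγterm : γ (⨆ τ : Set.Icc T t, ‖ξ (τ : ℝ)‖) < ε/2 := by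
    have := hδ (x := ⨆ τ : Set.Icc T t, ‖ξ (τ : ℝ)‖) hsup_nonneg
      (by rw [Real.dist_eq, sub_zero, abs_of_nonneg hsup_nonneg]; linarith)
    rw [Real.dist_eq, sub_zero] at this
    exact lt_of_le_of_lt (le_abs_self _) this
  -- β term small
  have hβterm : β ‖z T‖ (t - T) < ε/2 :=
    lt_of_le_of_lt (le_abs_self _) (hS (t - T) (by linarith))
  calc ‖z t‖ ≤ β ‖z T‖ (t - T) + γ (⨆ τ : Set.Icc T t, ‖ξ (τ : ℝ)‖) := hISSt
    _ < ε/2 + ε/2 := add_lt_add hβterm hγterm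
    _ = ε := by ring
end

section
/- Consider the closed-loop interconnection of a nonlinear OSNI system H_p (storage V, V̇ ≤ wᵀẏ − ε‖ẏ‖², ε > 0, input w, output y) and a nonlinear NI system H_c (storage V_c, V̇_c ≤ u_cᵀẏ_c) connected via w = y_c and u_c = y. Then the function W = V + V_c − y_cᵀ y satisfies Ẇ ≤ −ε‖ẏ‖² ≤ 0 along trajectories of the interconnection. -/
open scoped RealInnerProductSpace

/-- For the interconnection of a nonlinear OSNI system H_p
(storage V, V̇ ≤ wᵀẏ − ε‖ẏ‖²) and a nonlinear NI system H_c (storage V_c,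
V̇_c ≤ u_cᵀẏ_c) via w = y_c and u_c = y, the function W = V + V_c − y_cᵀy
satisfies Ẇ ≤ −ε‖ẏ‖² ≤ 0 along trajectories. -/
theorem interconnection_lyapunov_decrease
    {p : ℕ} (ε : ℝ) (hε : 0 < ε)
    -- storage functions evaluated along the trajectory, with their derivatives
    (V Vc Vd Vcd : ℝ → ℝ)
    (hVpsd : ∀ t, 0 ≤ V t) (hVcpsd : ∀ t, 0 ≤ Vc t)
    (w uc y yc y' yc' : ℝ → EuclideanSpace ℝ (Fin p))
    (hV : ∀ t, HasDerivAt V (Vd t) t)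
    (hVc : ∀ t, HasDerivAt Vc (Vcd t) t)
    (hy : ∀ t, HasDerivAt y (y' t) t)
    (hyc : ∀ t, HasDerivAt yc (yc' t) t)
    -- OSNI property of H_p and NI property of H_c
    (hOSNI : ∀ t, Vd t ≤ ⟪w t, y' t⟫ - ε * ‖y' t‖ ^ 2)
    (hNI : ∀ t, Vcd t ≤ ⟪uc t, yc' t⟫)
    -- interconnection
    (hw : ∀ t, w t = yc t) (huc : ∀ t, uc t = y t)
    (t : ℝ) :
    HasDerivAt (fun s => V s + Vc s - ⟪yc s, y s⟫)
      (Vd t + Vcd t - ⟪yc' t, y t⟫ - ⟪yc t, y' t⟫) t ∧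
    Vd t + Vcd t - ⟪yc' t, y t⟫ - ⟪yc t, y' t⟫ ≤ -ε * ‖y' t‖ ^ 2 ∧
    Vd t + Vcd t - ⟪yc' t, y t⟫ - ⟪yc t, y' t⟫ ≤ 0 := by
  have hinner : HasDerivAt (fun s => ⟪yc s, y s⟫) (⟪yc' t, y t⟫ + ⟪yc t, y' t⟫) t :=
    by simpa [add_comm] using (hyc t).inner ℝ (hy t)
  have hbound : Vd t + Vcd t - ⟪yc' t, y t⟫ - ⟪yc t, y' t⟫ ≤ -ε * ‖y' t‖ ^ 2 := by
    have h1 := hOSNI t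
    have h2 := hNI t
    rw [hw t] at h1
    rw [huc t] at h2
    rw [real_inner_comm] at h2
    linarith
  refine ⟨?_, hbound, hbound.trans ?_⟩
  · have := ((hV t).add (hVc t)).sub hinner
    convert this using 1
    · rfl
    · rfl
    · rfl
    ring
  · nlinarith [sq_nonneg ‖y' t‖]
end
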